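/- arXiv:0807.4247 — 2 statements merged into one kernel-verified Lean document; each statement's English description precedes it below -/
import Mathlib

section
/- Let 𝒞 be a Z2Z4-additive code and C = Φ(𝒞) the corresponding Z2Z4-linear code. Then C is a Z2-linear subspace of Z2^(α+2β) if and only if 2(u*v) ∈ 𝒞 for all u, v ∈ 𝒞. -/
/-- The ambient group `Z2^α × Z4^β`, with componentwise ring structure
(so `u * v` is the componentwise product). -/
abbrev Amb (α β : ℕ) := (Fin α → ZMod 2) × (Fin β → ZMod 4)

/-- The binary space `Z2^α × (Z2²)^β ≅ Z2^(α+2β)`. -/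
abbrev Bin (α β : ℕ) := (Fin α → ZMod 2) × (Fin β → ZMod 2 × ZMod 2)

/-- The Gray map `φ : Z4 → Z2²` with `φ(0)=(0,0), φ(1)=(0,1), φ(2)=(1,1), φ(3)=(1,0)`. -/
def grayPair (y : ZMod 4) : ZMod 2 × ZMod 2 :=
  match y.val with
  | 0 => (0, 0)
  | 1 => (0, 1)
  | 2 => (1, 1)
  | _ => (1, 0)

/-- The extended Gray map `Φ : Z2^α × Z4^β → Z2^(α+2β)`. -/
def Phi {α β : ℕ} (u : Amb α β) : Bin α β :=
  (u.1, fun i => grayPair (u.2 i))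

/-- The kernel `K(C) = {x | x + C = C}` of a binary code. -/
def kernelK {α β : ℕ} (C : Set (Bin α β)) : Set (Bin α β) :=
  {x | (fun y => x + y) '' C = C}

/-- The rank of a binary code: the `Z2`-dimension of its linear span. -/
noncomputable def rankOf {α β : ℕ} (C : Set (Bin α β)) : ℕ :=
  Module.finrank (ZMod 2) (Submodule.span (ZMod 2) C)

/-- The dimension of the kernel of a binary code. -/
noncomputable def kerDim {α β : ℕ} (C : Set (Bin α β)) : ℕ :=
  Module.finrank (ZMod 2) (Submodule.span (ZMod 2) (kernelK C))

/-- A `Z2Z4`-additive code `C ⊆ Z2^α × Z4^β` is of type `(α,β;γ,δ;κ)`: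
`|C| = 2^(γ+2δ)`, the number of elements `x` with `2x = 0` is `2^(γ+δ)`, and `κ` is the
`Z2`-dimension of the projection onto the first `α` coordinates of `{x ∈ C | 2x = 0}`. -/
def IsTypeOf (α β γ δ κ : ℕ) (C : AddSubgroup (Amb α β)) : Prop :=
  Nat.card C = 2 ^ (γ + 2 * δ) ∧
  Nat.card {x : Amb α β | x ∈ C ∧ 2 • x = 0} = 2 ^ (γ + δ) ∧
  Module.finrank (ZMod 2)
    (Submodule.span (ZMod 2) (Prod.fst '' {x : Amb α β | x ∈ C ∧ 2 • x = 0})) = κ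


lemma grayPair_inj : Function.Injective grayPair := by decide

lemma grayPair_sum3 (x y : ZMod 4) :
    grayPair x + grayPair y + grayPair (x + y) = grayPair (2 * (x * y)) := by
  revert x y; decide

lemma grayPair_add' (x y : ZMod 4) :
    grayPair x + grayPair y = grayPair (x + y + 2 * (x * y)) := by
  revert x y; decide

lemma Phi_inj {α β : ℕ} : Function.Injective (Phi (α := α) (β := β)) := by
  intro u v h
  simp only [Phi, Prod.mk.injEq] at h
  refine Prod.ext h.1 (funext fun i => grayPair_inj ?_)
  exact congrFun h.2 i

lemma Phi_add_add {α β : ℕ} (u v : Amb α β) :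
    Phi u + Phi v + Phi (u + v) = Phi (2 * (u * v)) := by
  refine Prod.ext ?_ ?_
  · show u.1 + v.1 + (u.1 + v.1) = 2 * (u.1 * v.1)
    funext i
    have key : ∀ a b : ZMod 2, a + b + (a + b) = 2 * (a * b) := by decide
    exact key (u.1 i) (v.1 i)
  · funext i
    exact grayPair_sum3 (u.2 i) (v.2 i)

lemma Phi_add' {α β : ℕ} (u v : Amb α β) :
    Phi u + Phi v = Phi (u + v + 2 * (u * v)) := by
  refine Prod.ext ?_ ?_
  · show u.1 + v.1 = u.1 + v.1 + 2 * (u.1 * v.1)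
    funext i
    have key : ∀ a b : ZMod 2, a + b = a + b + 2 * (a * b) := by decide
    exact key (u.1 i) (v.1 i)
  · funext i
    exact grayPair_add' (u.2 i) (v.2 i)

lemma Phi_zero {α β : ℕ} : Phi (0 : Amb α β) = 0 := by
  refine Prod.ext rfl ?_
  funext i
  show grayPair 0 = 0
  rfl

/-- `Φ(𝒞)` is a `Z2`-linear subspace iff `2(u*v) ∈ 𝒞` for all `u, v ∈ 𝒞`. -/
theorem gray_image_linear_iff (α β : ℕ) (C : AddSubgroup (Amb α β)) :
    (∃ W : Submodule (ZMod 2) (Bin α β), (W : Set (Bin α β)) = Phi '' (C : Set (Amb α β))) ↔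
      ∀ u ∈ C, ∀ v ∈ C, 2 * (u * v) ∈ C := by
  constructor
  · rintro ⟨W, hW⟩ u hu v hv
    have hmem : ∀ w ∈ C, Phi w ∈ W := fun w hw => by
      rw [← SetLike.mem_coe, hW]; exact ⟨w, hw, rfl⟩
    have h : Phi (2 * (u * v)) ∈ W := by
      rw [← Phi_add_add]
      exact W.add_mem (W.add_mem (hmem u hu) (hmem v hv)) (hmem _ (C.add_mem hu hv))
    rw [← SetLike.mem_coe, hW] at h
    obtain ⟨w, hw, hweq⟩ := h
    rwa [← Phi_inj hweq]
  · intro h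
    refine ⟨{ carrier := Phi '' (C : Set (Amb α β))
              zero_mem' := ⟨0, C.zero_mem, Phi_zero⟩
              add_mem' := ?_
              smul_mem' := ?_ }, rfl⟩
    · rintro a b ⟨u, hu, rfl⟩ ⟨v, hv, rfl⟩
      exact ⟨u + v + 2 * (u * v),
        C.add_mem (C.add_mem hu hv) (h u hu v hv), (Phi_add' u v).symm⟩
    · rintro c a ⟨u, hu, rfl⟩
      fin_cases c
      · exact ⟨0, C.zero_mem, by rw [Phi_zero]; exact (zero_smul (ZMod 2) _).symm⟩
      · exact ⟨u, hu, (one_smul (ZMod 2) _).symm⟩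
end

section
/- Let α, β, γ, δ, κ be integers satisfying α, β, γ, δ, κ ≥ 0, α+β > 0, 0 < δ+γ ≤ β+κ, and κ ≤ min(α, γ). Then for every integer r with γ+2δ ≤ r ≤ min(β+δ+κ, γ+2δ+δ(δ−1)/2), there exists a Z2Z4-additive code 𝒞 of type (α,β;γ,δ;κ) such that rank(Φ(𝒞)) = r. -/
namespace ZAux

/-- embedding `ZMod 2 → ZMod 4`, `b ↦ 2b`. -/
def em2 (b : ZMod 2) : ZMod 4 := 2 * (b.val : ZMod 4)

/-- reduction `ZMod 4 → ZMod 2`. -/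
def dn2 (a : ZMod 4) : ZMod 2 := (a.val : ZMod 2)

lemma em2_add : ∀ u v : ZMod 2, em2 (u + v) = em2 u + em2 v := by decide
lemma em2_inj : ∀ u v : ZMod 2, em2 u = em2 v → u = v := by decide
lemma em2_zero : em2 0 = 0 := by decide
lemma z2_self : ∀ x : ZMod 2, x + x = 0 := by decide
lemma z4_four : ∀ a : ZMod 4, (a + a) + (a + a) = 0 := by decide
lemma em2_self : ∀ u : ZMod 2, em2 u + em2 u = 0 := by decide
lemma z4_two_em : ∀ a : ZMod 4, a + a = 0 → ∃ u : ZMod 2, a = em2 u := by decide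
lemma scal2 : ∀ u v : ZMod 2, em2 u * em2 v + em2 u * em2 v = em2 0 := by decide
lemma scal3 : ∀ (x y x' y' : ZMod 4) (u v : ZMod 2),
    (x + y + em2 u) * (x' + y' + em2 v) + (x + y + em2 u) * (x' + y' + em2 v)
      = (x * x' + x * x') + (y * y' + y * y') + em2 (dn2 (x * y' + y * x')) := by decide

section Cons

variable (α β κ δ c2 rb : ℕ) (p : Fin rb → Fin δ × Fin δ)

/-- padding `Z2^κ → Z2^α`. -/
def pad (a : Fin κ → ZMod 2) : Fin α → ZMod 2 :=
  fun s => if h : (s : ℕ) < κ then a ⟨s, h⟩ else 0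

/-- quaternary part of a codeword. -/
def qpart (c : Fin δ → ZMod 4) (b : Fin c2 → ZMod 2) (d : Fin rb → ZMod 2) :
    Fin β → ZMod 4 :=
  fun j =>
    if h1 : (j : ℕ) < δ then c ⟨j, h1⟩
    else if h2 : (j : ℕ) < δ + c2 then em2 (b ⟨(j : ℕ) - δ, by omega⟩)
    else if h3 : (j : ℕ) < δ + c2 + rb then
      c (p ⟨(j : ℕ) - (δ + c2), by omega⟩).1 + c (p ⟨(j : ℕ) - (δ + c2), by omega⟩).2
        + em2 (d ⟨(j : ℕ) - (δ + c2), by omega⟩)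
    else 0

/-- domain of the full generator map -/
abbrev D := (Fin κ → ZMod 2) × (Fin c2 → ZMod 2) × (Fin δ → ZMod 4) × (Fin rb → ZMod 2)

def Ffun (z : D κ δ c2 rb) : Amb α β :=
  (pad α κ z.1, qpart β δ c2 rb p z.2.2.1 z.2.1 z.2.2.2)

lemma Ffun_zero : Ffun α β κ δ c2 rb p 0 = 0 := by
  refine Prod.ext ?_ ?_
  · funext s; simp [Ffun, pad]
  · funext j; simp only [Ffun, qpart]
    split_ifs <;> simp [em2_zero]

lemma Ffun_add (z w : D κ δ c2 rb) :
    Ffun α β κ δ c2 rb p (z + w) = Ffun α β κ δ c2 rb p z + Ffun α β κ δ c2 rb p w := by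
  refine Prod.ext ?_ ?_
  · funext s; simp only [Ffun, pad, Prod.fst_add, Pi.add_apply]
    split_ifs <;> simp
  · funext j; simp only [Ffun, qpart, Prod.snd_add, Pi.add_apply]
    split_ifs <;> simp [em2_add] <;> ring

/-- the full generator map as an `AddMonoidHom`. -/
def F : D κ δ c2 rb →+ Amb α β where
  toFun := Ffun α β κ δ c2 rb p
  map_zero' := Ffun_zero α β κ δ c2 rb p
  map_add' := Ffun_add α β κ δ c2 rb p

variable (hκ : κ ≤ α) (hβ : δ + c2 + rb ≤ β)

lemma F_inj (hκ : κ ≤ α) (hβ : δ + c2 + rb ≤ β) :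
    Function.Injective (Ffun α β κ δ c2 rb p) := by
  have h0 : ∀ z : D κ δ c2 rb, Ffun α β κ δ c2 rb p z = 0 → z = 0 := by
    rintro ⟨a, b, c, d⟩ h
    have h1 := congrArg Prod.fst h
    have h2 := congrArg Prod.snd h
    simp only [Ffun] at h1 h2
    have ha : a = 0 := by
      funext s
      have := congr_fun h1 ⟨(s : ℕ), lt_of_lt_of_le s.2 hκ⟩
      simpa [pad, s.2] using this
    have hc : c = 0 := by
      funext i
      have := congr_fun h2 ⟨(i : ℕ), by omega⟩
      simpa [qpart, i.2] using this
    have hb : b = 0 := by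
      funext l
      have := congr_fun h2 ⟨δ + (l : ℕ), by omega⟩
      simp only [qpart] at this
      rw [dif_neg (by simp), dif_pos (by simpa using l.2)] at this
      have : em2 (b ⟨δ + (l : ℕ) - δ, by omega⟩) = em2 0 := by simpa [em2_zero] using this
      have := em2_inj _ _ this
      simpa [show δ + (l : ℕ) - δ = (l : ℕ) by omega] using this
    have hd : d = 0 := by
      funext t
      have := congr_fun h2 ⟨δ + c2 + (t : ℕ), by omega⟩
      simp only [qpart] at this
      rw [dif_neg (by omega), dif_neg (by omega), dif_pos (by simpa using t.2)] at this
      simp only [hc, Pi.zero_apply, zero_add] at this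
      have : em2 (d ⟨δ + c2 + (t : ℕ) - (δ + c2), by omega⟩) = em2 0 := by
        simpa [em2_zero] using this
      have := em2_inj _ _ this
      simpa [show δ + c2 + (t : ℕ) - (δ + c2) = (t : ℕ) by omega] using this
    simp [ha, hb, hc, hd, Prod.ext_iff]
  intro z w hzw
  have : Ffun α β κ δ c2 rb p (z - w) = 0 := by
    have := map_sub (F α β κ δ c2 rb p) z w
    simp only [F, AddMonoidHom.coe_mk, ZeroHom.coe_mk] at this
    rw [this, hzw, sub_self]
  have := h0 _ this
  exact sub_eq_zero.mp this

end Cons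
end ZAux

namespace ZAux
section Cons2
variable (α β κ δ c2 rb : ℕ) (p : Fin rb → Fin δ × Fin δ)

def prodC (c c' : Fin δ → ZMod 4) : Fin δ → ZMod 4 := fun i => c i * c' i + c i * c' i

def prodD (c c' : Fin δ → ZMod 4) : Fin rb → ZMod 2 :=
  fun t => dn2 (c (p t).1 * c' (p t).2 + c (p t).2 * c' (p t).1)

/-- the key closure identity: twice the componentwise product of two codewords. -/
lemma mul_self_closure (z w : D κ δ c2 rb) :
    Ffun α β κ δ c2 rb p z * Ffun α β κ δ c2 rb p w
      + Ffun α β κ δ c2 rb p z * Ffun α β κ δ c2 rb p w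
      = Ffun α β κ δ c2 rb p
          (0, 0, prodC δ z.2.2.1 w.2.2.1, prodD δ rb p z.2.2.1 w.2.2.1) := by
  obtain ⟨a, b, c, d⟩ := z
  obtain ⟨a', b', c', d'⟩ := w
  refine Prod.ext ?_ ?_
  · funext s
    simp only [Ffun, pad, Prod.fst_mul, Prod.fst_add, Pi.mul_apply, Pi.add_apply]
    split_ifs <;> simp [z2_self]
  · funext j
    simp only [Ffun, qpart, Prod.snd_mul, Prod.snd_add, Pi.mul_apply, Pi.add_apply]
    split_ifs with h1 h2 h3
    · simp [prodC]
    · simpa using scal2 (b ⟨(j : ℕ) - δ, by omega⟩) (b' ⟨(j : ℕ) - δ, by omega⟩)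
    · simpa [prodC, prodD] using
        scal3 (c (p ⟨(j : ℕ) - (δ + c2), by omega⟩).1) (c (p ⟨(j : ℕ) - (δ + c2), by omega⟩).2)
          (c' (p ⟨(j : ℕ) - (δ + c2), by omega⟩).1) (c' (p ⟨(j : ℕ) - (δ + c2), by omega⟩).2)
          (d ⟨(j : ℕ) - (δ + c2), by omega⟩) (d' ⟨(j : ℕ) - (δ + c2), by omega⟩)
    · simp

end Cons2

section GrayLemmas
variable {α β : ℕ}

lemma gadd : ∀ a b : ZMod 4,
    grayPair (a + b) = grayPair a + grayPair b + grayPair (a * b + a * b) := by decide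
lemma geven : ∀ a b : ZMod 4, b + b = 0 → grayPair (a + b) = grayPair a + grayPair b := by
  decide
lemma ginj : ∀ a b : ZMod 4, grayPair a = grayPair b → a = b := by decide
lemma g0 : grayPair 0 = 0 := by decide

lemma bin_self (v : Bin α β) : v + v = 0 := by
  refine Prod.ext ?_ ?_
  · funext s; exact z2_self _
  · funext j
    show v.2 j + v.2 j = 0
    exact (by decide : ∀ x : ZMod 2 × ZMod 2, x + x = 0) _

lemma phi_zero : Phi (0 : Amb α β) = 0 := by
  refine Prod.ext rfl ?_
  funext j; exact g0

lemma phi_add (x y : Amb α β) :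
    Phi (x + y) = Phi x + Phi y + Phi (x * y + x * y) := by
  refine Prod.ext ?_ ?_
  · show x.1 + y.1 = x.1 + y.1 + (x.1 * y.1 + x.1 * y.1)
    funext s
    show x.1 s + y.1 s = x.1 s + y.1 s + (x.1 s * y.1 s + x.1 s * y.1 s)
    revert s; intro s
    generalize x.1 s = u; generalize y.1 s = v; revert u v; decide
  · funext j
    exact gadd (x.2 j) (y.2 j)

lemma phi_even (x h : Amb α β) (hh : h + h = 0) : Phi (x + h) = Phi x + Phi h := by
  refine Prod.ext rfl ?_
  funext j
  refine geven (x.2 j) (h.2 j) ?_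
  exact congr_fun (congrArg Prod.snd hh) j

lemma phi_inj : Function.Injective (Phi (α := α) (β := β)) := by
  rintro ⟨x1, x2⟩ ⟨y1, y2⟩ h
  have h1 := congrArg Prod.fst h
  have h2 := congrArg Prod.snd h
  simp only [Phi] at h1 h2
  refine Prod.ext h1 ?_
  funext j
  exact ginj _ _ (congr_fun h2 j)

/-- rearrangement in the characteristic-2 group `Bin`. -/
lemma bin_rearr {a b c d : Bin α β} (h : a = b + c + d) : d = a + b + c := by
  subst h
  have : b + c + d + b + c = (b + b) + ((c + c) + d) := by abel
  rw [this, bin_self, bin_self, zero_add, zero_add]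
end GrayLemmas
end ZAux

namespace ZAux
section Cons3
variable (α β κ δ c2 rb : ℕ) (p : Fin rb → Fin δ × Fin δ)

lemma amb_even (w : Amb α β) : (w + w) + (w + w) = 0 := by
  refine Prod.ext ?_ ?_
  · funext s; exact (by decide : ∀ x : ZMod 2, (x + x) + (x + x) = 0) _
  · funext j; exact z4_four _

lemma phi_add' (x y : Amb α β) :
    Phi x + Phi y = Phi (x + y) + Phi (x * y + x * y) := by
  have h2 := bin_rearr (phi_add x y)
  rw [h2]
  have : Phi (x + y) + (Phi (x + y) + Phi x + Phi y)
      = (Phi (x + y) + Phi (x + y)) + (Phi x + Phi y) := by abel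
  rw [this, bin_self, zero_add]

/-- the linear span of the Gray image, as an explicit submodule. -/
def P : Submodule (ZMod 2) (Bin α β) where
  carrier := Phi '' Set.range (Ffun α β κ δ c2 rb p)
  zero_mem' := ⟨0, ⟨0, Ffun_zero α β κ δ c2 rb p⟩, phi_zero⟩
  add_mem' := by
    rintro x y ⟨u, ⟨z, rfl⟩, rfl⟩ ⟨v, ⟨w, rfl⟩, rfl⟩
    set u := Ffun α β κ δ c2 rb p z with hu
    set v := Ffun α β κ δ c2 rb p w with hv
    have heq : Phi u + Phi v = Phi (u + v + (u * v + u * v)) := by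
      rw [phi_add' α β u v, ← phi_even (u + v) _ (amb_even α β (u * v))]
    rw [heq]
    refine ⟨_, ⟨z + w + (0, 0, prodC δ z.2.2.1 w.2.2.1, prodD δ rb p z.2.2.1 w.2.2.1), ?_⟩, rfl⟩
    rw [Ffun_add, Ffun_add, ← mul_self_closure, hu, hv]
  smul_mem' := by
    intro r x hx
    rcases (by decide : ∀ r : ZMod 2, r = 0 ∨ r = 1) r with rfl | rfl
    · rw [zero_smul]
      exact ⟨0, ⟨0, Ffun_zero α β κ δ c2 rb p⟩, phi_zero⟩
    · rw [one_smul]; exact hx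

/-- the subcode generator map (no `d`-part). -/
def F0fun (z : (Fin κ → ZMod 2) × (Fin c2 → ZMod 2) × (Fin δ → ZMod 4)) : Amb α β :=
  Ffun α β κ δ c2 rb p (z.1, z.2.1, z.2.2, 0)

lemma heven (d : Fin rb → ZMod 2) :
    Ffun α β κ δ c2 rb p (0, 0, 0, d) + Ffun α β κ δ c2 rb p (0, 0, 0, d) = 0 := by
  refine Prod.ext ?_ ?_
  · funext s; simp [Ffun, pad]
  · funext j
    simp only [Ffun, qpart, Prod.snd_add, Pi.add_apply]
    split_ifs <;> simp [em2_self, em2_zero]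

def stfun (t : Fin rb) : Fin rb → ZMod 2 := fun j => if t = j then 1 else 0

def esfun (i : Fin δ) : Fin δ → ZMod 4 := fun x => if x = i then 1 else 0

variable (hpp : ∀ t, (p t).1 < (p t).2) (p_inj : Function.Injective p)

include hpp p_inj in
lemma key_step (t : Fin rb) :
    Ffun α β κ δ c2 rb p (0, 0, esfun δ (p t).1, 0) * Ffun α β κ δ c2 rb p (0, 0, esfun δ (p t).2, 0)
      + Ffun α β κ δ c2 rb p (0, 0, esfun δ (p t).1, 0) * Ffun α β κ δ c2 rb p (0, 0, esfun δ (p t).2, 0)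
      = Ffun α β κ δ c2 rb p (0, 0, 0, stfun rb t) := by
  set i := (p t).1
  set j := (p t).2
  have hij : i < j := hpp t
  have hne : i ≠ j := ne_of_lt hij
  rw [mul_self_closure]
  have hC : prodC δ (esfun δ i) (esfun δ j) = 0 := by
    funext x
    by_cases hxi : x = i
    · subst hxi
      simp [prodC, esfun, hne]
    · simp [prodC, esfun, hxi]
  have hD : prodD δ rb p (esfun δ i) (esfun δ j) = stfun rb t := by
    funext t'
    by_cases ht : t' = t
    · subst ht
      simp [prodD, esfun, stfun, hne, Ne.symm hne]
      rw [if_pos rfl, if_pos rfl, if_neg (ne_of_lt (hpp t')), add_zero]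
      decide
    · have h1 : esfun δ i (p t').1 * esfun δ j (p t').2 = 0 := by
        by_cases e1 : (p t').1 = i
        · by_cases e2 : (p t').2 = j
          · exact absurd (p_inj (Prod.ext e1 e2)) ht
          · simp [esfun, e2]
        · simp [esfun, e1]
      have h2 : esfun δ i (p t').2 * esfun δ j (p t').1 = 0 := by
        by_cases e1 : (p t').2 = i
        · by_cases e2 : (p t').1 = j
          · have hlt := hpp t'
            rw [e1, e2] at hlt
            exact absurd hlt (not_lt.mpr (le_of_lt hij))
          · simp [esfun, e2]
        · simp [esfun, e1]
      simp [prodD, h1, h2, stfun, dn2, Ne.symm ht]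
  rw [hC, hD]

/-- `Phi` of the pure `d`-part codewords, as an additive hom. -/
def Hmap : (Fin rb → ZMod 2) →+ Bin α β where
  toFun := fun d => Phi (Ffun α β κ δ c2 rb p (0, 0, 0, d))
  map_zero' := by
    show Phi (Ffun α β κ δ c2 rb p (0, 0, 0, (0 : Fin rb → ZMod 2))) = 0
    rw [show ((0, 0, 0, (0 : Fin rb → ZMod 2)) : D κ δ c2 rb) = 0 from rfl,
      Ffun_zero, phi_zero]
  map_add' := by
    intro d d'
    show Phi (Ffun α β κ δ c2 rb p (0, 0, 0, d + d'))
      = Phi (Ffun α β κ δ c2 rb p (0, 0, 0, d)) + Phi (Ffun α β κ δ c2 rb p (0, 0, 0, d'))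
    rw [show ((0, 0, 0, d + d') : D κ δ c2 rb)
        = ((0, 0, 0, d) : D κ δ c2 rb) + (0, 0, 0, d') from by
      simp [Prod.ext_iff], Ffun_add, phi_even _ _ (heven α β κ δ c2 rb p d')]

include hpp p_inj in
lemma hmem (d : Fin rb → ZMod 2) :
    Phi (Ffun α β κ δ c2 rb p (0, 0, 0, d)) ∈
      Submodule.span (ZMod 2) (Phi '' Set.range (F0fun α β κ δ c2 rb p)) := by
  have hd : d = ∑ t : Fin rb, d t • stfun rb t := by
    have := pi_eq_sum_univ d
    exact this
  have : Phi (Ffun α β κ δ c2 rb p (0, 0, 0, d)) = Hmap α β κ δ c2 rb p d := rfl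
  rw [this, show (Hmap α β κ δ c2 rb p) d
      = (Hmap α β κ δ c2 rb p) (∑ t : Fin rb, d t • stfun rb t) from by rw [← hd],
    map_sum]
  refine Submodule.sum_mem _ ?_
  intro t _
  rcases (by decide : ∀ r : ZMod 2, r = 0 ∨ r = 1) (d t) with h0 | h1
  · rw [h0, zero_smul, map_zero]; exact Submodule.zero_mem _
  · rw [h1, one_smul]
    -- `Hmap (stfun t) = Phi (x*y + x*y)` for the two basis codewords
    set x := Ffun α β κ δ c2 rb p (0, 0, esfun δ (p t).1, 0) with hx
    set y := Ffun α β κ δ c2 rb p (0, 0, esfun δ (p t).2, 0) with hy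
    have hstep := key_step α β κ δ c2 rb p hpp p_inj t
    have : Hmap α β κ δ c2 rb p (stfun rb t) = Phi (x * y + x * y) := by
      show Phi (Ffun α β κ δ c2 rb p (0, 0, 0, stfun rb t)) = _
      rw [← hstep]
    rw [this, bin_rearr (phi_add x y)]
    have m1 : Phi (x + y) ∈ Phi '' Set.range (F0fun α β κ δ c2 rb p) := by
      refine ⟨x + y, ⟨(0, 0, esfun δ (p t).1 + esfun δ (p t).2), ?_⟩, rfl⟩
      rw [F0fun, show ((0, 0, esfun δ (p t).1 + esfun δ (p t).2, 0) : D κ δ c2 rb)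
          = ((0, 0, esfun δ (p t).1, 0) : D κ δ c2 rb) + (0, 0, esfun δ (p t).2, 0) from by
        simp [Prod.ext_iff], Ffun_add]
    have m2 : Phi x ∈ Phi '' Set.range (F0fun α β κ δ c2 rb p) :=
      ⟨x, ⟨(0, 0, esfun δ (p t).1), rfl⟩, rfl⟩
    have m3 : Phi y ∈ Phi '' Set.range (F0fun α β κ δ c2 rb p) :=
      ⟨y, ⟨(0, 0, esfun δ (p t).2), rfl⟩, rfl⟩
    exact add_mem (add_mem (Submodule.subset_span m1) (Submodule.subset_span m2))
      (Submodule.subset_span m3)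

include hpp p_inj in
lemma span_eq_P :
    Submodule.span (ZMod 2) (Phi '' Set.range (F0fun α β κ δ c2 rb p))
      = P α β κ δ c2 rb p := by
  apply le_antisymm
  · rw [Submodule.span_le]
    rintro x ⟨u, ⟨z, rfl⟩, rfl⟩
    exact ⟨_, ⟨(z.1, z.2.1, z.2.2, 0), rfl⟩, rfl⟩
  · rintro x ⟨u, ⟨z, rfl⟩, rfl⟩
    obtain ⟨a, b, c, d⟩ := z
    have hsplit : Ffun α β κ δ c2 rb p (a, b, c, d)
        = F0fun α β κ δ c2 rb p (a, b, c) + Ffun α β κ δ c2 rb p (0, 0, 0, d) := by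
      rw [F0fun, ← Ffun_add]
      congr 1
      simp [Prod.ext_iff]
    rw [hsplit, phi_even _ _ (heven α β κ δ c2 rb p d)]
    exact add_mem (Submodule.subset_span ⟨_, ⟨(a, b, c), rfl⟩, rfl⟩)
      (hmem α β κ δ c2 rb p hpp p_inj d)

end Cons3
end ZAux

namespace ZAux

lemma card_pairs (δ : ℕ) :
    Fintype.card {q : Fin δ × Fin δ // q.1 < q.2} = δ * (δ - 1) / 2 := by
  have e : {q : Fin δ × Fin δ // q.1 < q.2} ≃ Σ j : Fin δ, Fin (j : ℕ) :=
    { toFun := fun x => ⟨x.1.2, ⟨(x.1.1 : ℕ), x.2⟩⟩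
      invFun := fun s => ⟨(⟨(s.2 : ℕ), lt_trans s.2.2 s.1.2⟩, s.1), s.2.2⟩
      left_inv := by rintro ⟨⟨u, v⟩, h⟩; rfl
      right_inv := by rintro ⟨j, i⟩; rfl }
  rw [Fintype.card_congr e, Fintype.card_sigma]
  simp only [Fintype.card_fin]
  rw [Fin.sum_univ_eq_sum_range (fun i => i) δ, Finset.sum_range_id]

section Cons4
variable (α β κ δ c2 rb : ℕ) (p : Fin rb → Fin δ × Fin δ)

def Gfun (z : (Fin κ → ZMod 2) × (Fin c2 → ZMod 2) × (Fin δ → ZMod 2)) : Amb α β :=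
  F0fun α β κ δ c2 rb p (z.1, z.2.1, fun i => em2 (z.2.2 i))

variable (hκ : κ ≤ α) (hβ : δ + c2 + rb ≤ β)

include hκ hβ in
lemma F0_inj : Function.Injective (F0fun α β κ δ c2 rb p) := by
  intro z w h
  have := F_inj α β κ δ c2 rb p hκ hβ h
  rw [Prod.ext_iff, Prod.ext_iff, Prod.ext_iff] at this
  exact Prod.ext this.1 (Prod.ext this.2.1 this.2.2.1)

include hκ hβ in
lemma G_inj : Function.Injective (Gfun α β κ δ c2 rb p) := by
  intro z w h
  have := F0_inj α β κ δ c2 rb p hκ hβ h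
  rw [Prod.ext_iff, Prod.ext_iff] at this
  refine Prod.ext this.1 (Prod.ext this.2.1 ?_)
  funext i
  exact em2_inj _ _ (congr_fun this.2.2 i)

include hκ hβ in
lemma torsion_eq :
    {x : Amb α β | x ∈ Set.range (F0fun α β κ δ c2 rb p) ∧ 2 • x = 0}
      = Set.range (Gfun α β κ δ c2 rb p) := by
  ext x
  constructor
  · rintro ⟨⟨⟨a, b, c⟩, rfl⟩, h2⟩
    rw [two_nsmul] at h2
    have hww : ((a, b, c, 0) : D κ δ c2 rb) + (a, b, c, 0) = 0 := by
      apply F_inj α β κ δ c2 rb p hκ hβ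
      rw [Ffun_add, Ffun_zero]
      exact h2
    have hcc : c + c = 0 := congrArg (fun z => z.2.2.1) hww
    have hex : ∀ i, ∃ u : ZMod 2, c i = em2 u := by
      intro i
      exact z4_two_em (c i) (congr_fun hcc i)
    choose u hu using hex
    refine ⟨(a, b, u), ?_⟩
    show F0fun α β κ δ c2 rb p (a, b, fun i => em2 (u i)) = F0fun α β κ δ c2 rb p (a, b, c)
    congr 1
    refine Prod.ext rfl (Prod.ext rfl ?_)
    funext i
    exact (hu i).symm
  · rintro ⟨⟨a, b, u⟩, rfl⟩
    refine ⟨⟨(a, b, fun i => em2 (u i)), rfl⟩, ?_⟩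
    rw [two_nsmul]
    show Ffun α β κ δ c2 rb p (a, b, fun i => em2 (u i), 0)
        + Ffun α β κ δ c2 rb p (a, b, fun i => em2 (u i), 0) = 0
    rw [← Ffun_add, show ((a, b, fun i => em2 (u i), 0) : D κ δ c2 rb)
        + (a, b, fun i => em2 (u i), 0) = 0 from ?_, Ffun_zero]
    refine Prod.ext ?_ (Prod.ext ?_ (Prod.ext ?_ ?_))
    · funext s; exact z2_self _
    · funext l; exact z2_self _
    · funext i; exact em2_self _
    · funext t; exact z2_self _

include hκ hβ in
lemma fst_image :
    Prod.fst '' Set.range (Gfun α β κ δ c2 rb p) = Set.range (pad α κ) := by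
  ext x
  constructor
  · rintro ⟨y, ⟨⟨a, b, u⟩, rfl⟩, rfl⟩
    exact ⟨a, rfl⟩
  · rintro ⟨a, rfl⟩
    exact ⟨Gfun α β κ δ c2 rb p (a, 0, 0), ⟨(a, 0, 0), rfl⟩, rfl⟩

def padHom : (Fin κ → ZMod 2) →+ (Fin α → ZMod 2) where
  toFun := pad α κ
  map_zero' := by funext s; simp [pad]
  map_add' := by
    intro a a'
    funext s
    simp only [pad, Pi.add_apply]
    split_ifs <;> simp

include hκ in
lemma pad_inj : Function.Injective (pad α κ) := by
  intro a a' h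
  funext s
  have := congr_fun h ⟨(s : ℕ), lt_of_lt_of_le s.2 hκ⟩
  simpa [pad, s.2] using this

include hκ in
lemma finrank_span_pad :
    Module.finrank (ZMod 2)
      (Submodule.span (ZMod 2) (Set.range (pad α κ))) = κ := by
  set L := (padHom α κ).toZModLinearMap 2 with hL
  have hcoe : ⇑L = pad α κ := rfl
  have h1 : Set.range (pad α κ) = ↑(LinearMap.range L) := by
    rw [LinearMap.coe_range, hcoe]
  rw [h1, Submodule.span_eq, LinearMap.finrank_range_of_inj, Module.finrank_pi,
    Fintype.card_fin]
  rw [hcoe]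
  exact pad_inj α κ hκ

end Cons4
end ZAux

namespace ZAux
section Cons5
variable (α β κ δ c2 rb : ℕ) (p : Fin rb → Fin δ × Fin δ)

def F0Hom : (Fin κ → ZMod 2) × (Fin c2 → ZMod 2) × (Fin δ → ZMod 4) →+ Amb α β where
  toFun := F0fun α β κ δ c2 rb p
  map_zero' := by
    show Ffun α β κ δ c2 rb p (0, 0, 0, 0) = 0
    exact Ffun_zero α β κ δ c2 rb p
  map_add' := by
    intro z w
    show Ffun α β κ δ c2 rb p ((z + w).1, (z + w).2.1, (z + w).2.2, 0) = _
    rw [show (((z + w).1, (z + w).2.1, (z + w).2.2, (0 : Fin rb → ZMod 2)) : D κ δ c2 rb)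
        = ((z.1, z.2.1, z.2.2, 0) : D κ δ c2 rb) + (w.1, w.2.1, w.2.2, 0) from by
      simp [Prod.ext_iff], Ffun_add]
    rfl

end Cons5
end ZAux


open ZAux in
/-- for every admissible rank `r`, there is a `Z2Z4`-additive code of type
`(α,β;γ,δ;κ)` whose Gray image has rank `r`. -/
theorem exists_code_with_rank (α β γ δ κ r : ℕ)
    (h1 : 0 < α + β) (h2 : 0 < δ + γ) (h3 : δ + γ ≤ β + κ) (h4 : κ ≤ min α γ)
    (hr1 : γ + 2 * δ ≤ r)
    (hr2 : r ≤ min (β + δ + κ) (γ + 2 * δ + δ * (δ - 1) / 2)) :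
    ∃ C : AddSubgroup (Amb α β), IsTypeOf α β γ δ κ C ∧
      rankOf (Phi '' (C : Set (Amb α β))) = r := by
  obtain ⟨hκα, hκγ⟩ := le_min_iff.mp h4
  obtain ⟨hrβ, hrδ⟩ := le_min_iff.mp hr2
  set c2 := γ - κ with hc2
  set rb := r - (γ + 2 * δ) with hrbdef
  have hβ' : δ + c2 + rb ≤ β := by omega
  -- the pair-selection injection
  have hcard : Fintype.card (Fin rb) ≤ Fintype.card {q : Fin δ × Fin δ // q.1 < q.2} := by
    rw [Fintype.card_fin, card_pairs]
    generalize hm : δ * (δ - 1) / 2 = m at hrδ ⊢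
    omega
  obtain ⟨pe⟩ := Function.Embedding.nonempty_of_card_le hcard
  set p : Fin rb → Fin δ × Fin δ := fun t => (pe t).1 with hp
  have hpp : ∀ t, (p t).1 < (p t).2 := fun t => (pe t).2
  have p_inj : Function.Injective p := fun t t' h => pe.injective (Subtype.ext h)
  have hCset : ((F0Hom α β κ δ c2 rb p).range : Set (Amb α β))
      = Set.range (F0fun α β κ δ c2 rb p) := by
    ext x
    simp only [AddMonoidHom.coe_range, Set.mem_range]
    rfl
  have hmemiff : ∀ x : Amb α β, x ∈ (F0Hom α β κ δ c2 rb p).range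
      ↔ x ∈ Set.range (F0fun α β κ δ c2 rb p) := by
    intro x
    rw [← hCset]
    rfl
  have hF0inj := F0_inj α β κ δ c2 rb p hκα hβ'
  have hTset : {x : Amb α β | x ∈ (F0Hom α β κ δ c2 rb p).range ∧ 2 • x = 0}
      = Set.range (Gfun α β κ δ c2 rb p) := by
    rw [← torsion_eq α β κ δ c2 rb p hκα hβ']
    ext x
    simp only [Set.mem_setOf_eq, hmemiff]
  refine ⟨(F0Hom α β κ δ c2 rb p).range, ⟨?_, ?_, ?_⟩, ?_⟩
  · -- cardinality of the code
    have e1 : Nat.card (F0Hom α β κ δ c2 rb p).range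
        = Nat.card (Set.range (F0fun α β κ δ c2 rb p)) :=
      Nat.card_congr (Equiv.setCongr hCset)
    rw [e1, Nat.card_range_of_injective hF0inj]
    simp only [Nat.card_eq_fintype_card, Fintype.card_prod, Fintype.card_fun,
      ZMod.card, Fintype.card_fin]
    rw [show (4 : ℕ) = 2 ^ 2 from rfl, ← pow_mul, ← pow_add, ← pow_add]
    congr 1
    omega
  · -- cardinality of the 2-torsion
    rw [hTset, Nat.card_range_of_injective (G_inj α β κ δ c2 rb p hκα hβ')]
    simp only [Nat.card_eq_fintype_card, Fintype.card_prod, Fintype.card_fun,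
      ZMod.card, Fintype.card_fin]
    rw [← pow_add, ← pow_add]
    congr 1
    omega
  · -- the κ-condition
    rw [hTset, fst_image α β κ δ c2 rb p hκα hβ', finrank_span_pad α κ hκα]
  · -- the rank
    have hPset : ((P α β κ δ c2 rb p : Submodule (ZMod 2) (Bin α β)) : Set (Bin α β))
        = Set.range (Phi ∘ Ffun α β κ δ c2 rb p) := by
      rw [Set.range_comp]
      rfl
    have hPinj : Function.Injective (Phi ∘ Ffun α β κ δ c2 rb p) :=
      phi_inj.comp (F_inj α β κ δ c2 rb p hκα hβ')
    have hPcard : Nat.card (P α β κ δ c2 rb p) = 2 ^ r := by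
      have e2 : Nat.card (P α β κ δ c2 rb p)
          = Nat.card (Set.range (Phi ∘ Ffun α β κ δ c2 rb p)) :=
        Nat.card_congr (Equiv.setCongr hPset)
      rw [e2, Nat.card_range_of_injective hPinj]
      simp only [Nat.card_eq_fintype_card, Fintype.card_prod, Fintype.card_fun,
        ZMod.card, Fintype.card_fin]
      rw [show (4 : ℕ) = 2 ^ 2 from rfl, ← pow_mul, ← pow_add, ← pow_add, ← pow_add]
      congr 1
      omega
    haveI hfty : Fintype (P α β κ δ c2 rb p) := Fintype.ofFinite _
    have hcards := Module.card_eq_pow_finrank (K := ZMod 2) (V := P α β κ δ c2 rb p)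
    rw [ZMod.card] at hcards
    rw [← Nat.card_eq_fintype_card, hPcard] at hcards
    have hfr : Module.finrank (ZMod 2) (P α β κ δ c2 rb p) = r :=
      Nat.pow_right_injective (le_refl 2) hcards.symm
    rw [rankOf, hCset, span_eq_P α β κ δ c2 rb p hpp p_inj, hfr]
end
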